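/- arXiv:1907.03134 — 4 statements merged into one kernel-verified Lean document; each statement's English description precedes it below -/
import Mathlib

section
/- Let X = X₁ × X₂ be a product of real Hilbert spaces and f : X → ℝ differentiable. Suppose |·|₁ is a seminorm on X satisfying |(x₁, x₂)|₁ ≥ |(x₁, 0)|₁, f is σ₁-strongly convex with respect to |·|₁, and the first block of the gradient ∇₁f is L₁-Lipschitz with respect to |·|₁ in the sense that ⟨∇₁f(x + (h,0)) - ∇₁f(x), (h,0)⟩ ≤ L₁|(h,0)|₁². Let (xⁱ) be the sequence generated by exact alternating minimization over convex nonempty sets 𝒳̃₁ × 𝒳̃₂ ⊂ X₁ × X₂, and let x⋆ be the unique minimizer of f over 𝒳̃₁ × 𝒳̃₂. Then f(xⁱ) - f(x⋆) ≤ (1 - σ₁/L₁)ⁱ (f(x⁰) - f(x⋆)) for all i ∈ ℕ. -/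
set_option maxHeartbeats 1000000

open Set Filter

private lemma dirDeriv_nonneg_of_min {E : Type*} [NormedAddCommGroup E] [NormedSpace ℝ E]
    (f : E → ℝ) (Df : E → E →L[ℝ] ℝ) (hdiff : ∀ x, HasFDerivAt f (Df x) x)
    (y η : E) (hmin : ∀ t : ℝ, t ∈ Set.Icc (0:ℝ) 1 → f y ≤ f (y + t • η)) :
    0 ≤ Df y η := by
  have hline : HasDerivAt (fun t : ℝ => y + t • η) η 0 := by
    simpa using ((hasDerivAt_id (0:ℝ)).smul_const η).const_add y
  have hc : HasDerivAt (fun t : ℝ => f (y + t • η)) (Df y η) 0 := by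
    have := (hdiff (y + (0:ℝ) • η)).comp_hasDerivAt 0 hline
    simpa [Function.comp_def] using this
  rw [hasDerivAt_iff_tendsto_slope] at hc
  have hc' : Tendsto (slope (fun t : ℝ => f (y + t • η)) 0) (nhdsWithin 0 (Set.Ioi 0))
      (nhds (Df y η)) :=
    hc.mono_left (nhdsWithin_mono 0 (fun t ht => Set.mem_compl_singleton_iff.mpr (ne_of_gt ht)))
  refine ge_of_tendsto hc' ?_
  filter_upwards [Ioc_mem_nhdsGT_of_mem (Set.left_mem_Ico.2 zero_lt_one)] with t ht
  rw [slope_def_field]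
  apply div_nonneg
  · simpa using sub_nonneg.2 (hmin t ⟨ht.1.le, ht.2⟩)
  · simpa using ht.1.le

private lemma block1_descent
    {X₁ X₂ : Type*} [NormedAddCommGroup X₁] [InnerProductSpace ℝ X₁]
    [NormedAddCommGroup X₂] [InnerProductSpace ℝ X₂]
    (f : X₁ × X₂ → ℝ) (f' : X₁ × X₂ → X₁ × X₂) (Df : X₁ × X₂ → (X₁ × X₂) →L[ℝ] ℝ)
    (hdiff : ∀ x, HasFDerivAt f (Df x) x)
    (hgrad : ∀ x v, Df x v = (inner ℝ (f' x).1 v.1 : ℝ) + (inner ℝ (f' x).2 v.2 : ℝ))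
    (p₁ : Seminorm ℝ (X₁ × X₂)) (L₁ : ℝ)
    (hlip : ∀ (x : X₁ × X₂) (h : X₁),
      (inner ℝ ((f' (x + (h, 0))).1 - (f' x).1) h : ℝ) ≤ L₁ * (p₁ (h, 0)) ^ 2)
    (x : X₁ × X₂) (h : X₁) :
    f (x + (h, 0)) ≤ f x + (inner ℝ (f' x).1 h : ℝ) + L₁ / 2 * (p₁ (h, 0)) ^ 2 := by
  set η : X₁ × X₂ := (h, 0) with hη
  set c : ℝ := (inner ℝ (f' x).1 h : ℝ) with hc
  set K : ℝ := L₁ / 2 * (p₁ (h, 0)) ^ 2 with hK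
  have hφ : ∀ t : ℝ, HasDerivAt (fun s : ℝ => f (x + s • η)) (Df (x + t • η) η) t := by
    intro t
    have hline : HasDerivAt (fun s : ℝ => x + s • η) η t := by
      simpa using ((hasDerivAt_id t).smul_const η).const_add x
    exact (hdiff (x + t • η)).comp_hasDerivAt t hline
  set ψ : ℝ → ℝ := fun t => f x + c * t + K * t ^ 2 - f (x + t • η) with hψdef
  have hψ : ∀ t : ℝ, HasDerivAt ψ (c + K * (2 * t) - Df (x + t • η) η) t := by
    intro t
    have p1 : HasDerivAt (fun s : ℝ => c * s) c t := by
      simpa using (hasDerivAt_id t).const_mul c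
    have p2 : HasDerivAt (fun s : ℝ => K * s ^ 2) (K * (2 * t)) t := by
      have := (hasDerivAt_pow 2 t).const_mul K
      simpa [mul_comm, mul_assoc, mul_left_comm] using this
    have h1 : HasDerivAt (fun s : ℝ => f x + c * s + K * s ^ 2) (c + K * (2 * t)) t := by
      simpa [Pi.add_def] using ((p1.const_add (f x)).add p2)
    exact h1.sub (hφ t)
  have hdiffble : Differentiable ℝ ψ := fun t => (hψ t).differentiableAt
  have hmono : MonotoneOn ψ (Set.Icc (0:ℝ) 1) := by
    apply monotoneOn_of_deriv_nonneg (convex_Icc 0 1) hdiffble.continuous.continuousOn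
      hdiffble.differentiableOn
    intro t ht
    rw [interior_Icc] at ht
    rw [(hψ t).deriv]
    have hlt : (0:ℝ) < t := ht.1
    have hx1 : x + t • η = x + (t • h, 0) := by
      rw [hη, Prod.smul_mk, smul_zero]
    have hl := hlip x (t • h)
    rw [← hx1] at hl
    have hps : p₁ ((t • h, 0) : X₁ × X₂) = t * p₁ (h, 0) := by
      have he : ((t • h, (0:X₂)) : X₁ × X₂) = t • ((h, 0) : X₁ × X₂) := by
        rw [Prod.smul_mk, smul_zero]
      rw [he, map_smul_eq_mul, Real.norm_eq_abs, abs_of_pos hlt]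
    rw [hps, inner_sub_left, real_inner_smul_right, real_inner_smul_right] at hl
    have hineq : (inner ℝ (f' (x + t • η)).1 h : ℝ) ≤ c + L₁ * t * (p₁ (h,0))^2 := by
      rw [hc]; nlinarith [hl, hlt]
    rw [hgrad (x + t • η) η]
    have hz : (inner ℝ (f' (x + t • η)).2 η.2 : ℝ) = 0 := by
      rw [hη]; simp
    have hfst : η.1 = h := by rw [hη]
    rw [hz, hfst]
    have hKt : K * (2*t) = L₁ * t * (p₁ (h,0))^2 := by rw [hK]; ring
    linarith
  have h01 := hmono (Set.left_mem_Icc.2 zero_le_one) (Set.right_mem_Icc.2 zero_le_one) zero_le_one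
  have hψ0 : ψ 0 = 0 := by simp [hψdef]
  have hψ1 : ψ 1 = f x + c + K - f (x + η) := by simp [hψdef]
  rw [hψ0, hψ1] at h01
  have : f (x + η) ≤ f x + c + K := by linarith
  simpa [hη, hc, hK] using this

/-- A priori linear convergence of exact alternating minimization.
`f` is differentiable on the product of Hilbert spaces `X₁ × X₂` with gradient blocks
`(f' x).1, (f' x).2`; `f` is `σ₁`-strongly convex with respect to a seminorm `p₁`
satisfying `p₁ (x₁, 0) ≤ p₁ (x₁, x₂)`, and the first gradient block is `L₁`-Lipschitz
with respect to `p₁`. Then the alternating minimization iterates over the convex feasible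
set `S₁ ×ˢ S₂` satisfy `f(xⁱ) - f(x⋆) ≤ (1 - σ₁/L₁)ⁱ (f(x⁰) - f(x⋆))`. -/
theorem alternating_minimization_a_priori
    {X₁ X₂ : Type*} [NormedAddCommGroup X₁] [InnerProductSpace ℝ X₁] [CompleteSpace X₁]
    [NormedAddCommGroup X₂] [InnerProductSpace ℝ X₂] [CompleteSpace X₂]
    (f : X₁ × X₂ → ℝ) (f' : X₁ × X₂ → X₁ × X₂) (Df : X₁ × X₂ → (X₁ × X₂) →L[ℝ] ℝ)
    (hdiff : ∀ x, HasFDerivAt f (Df x) x)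
    (hgrad : ∀ x v, Df x v = (inner ℝ (f' x).1 v.1 : ℝ) + (inner ℝ (f' x).2 v.2 : ℝ))
    (p₁ : Seminorm ℝ (X₁ × X₂))
    (hp₁ : ∀ x : X₁ × X₂, p₁ (x.1, 0) ≤ p₁ x)
    (σ₁ L₁ : ℝ) (hσ₁ : 0 < σ₁) (hσL : σ₁ ≤ L₁)
    (hconv : ∀ x y : X₁ × X₂,
      f x + ((inner ℝ (f' x).1 (y.1 - x.1) : ℝ) + (inner ℝ (f' x).2 (y.2 - x.2) : ℝ))
        + σ₁ / 2 * (p₁ (y - x)) ^ 2 ≤ f y)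
    (hlip : ∀ (x : X₁ × X₂) (h : X₁),
      (inner ℝ ((f' (x + (h, 0))).1 - (f' x).1) h : ℝ) ≤ L₁ * (p₁ (h, 0)) ^ 2)
    (S₁ : Set X₁) (S₂ : Set X₂)
    (hS₁ : S₁.Nonempty) (hS₂ : S₂.Nonempty) (hS₁c : Convex ℝ S₁) (hS₂c : Convex ℝ S₂)
    (x : ℕ → X₁ × X₂) (hx0 : (x 0).1 ∈ S₁ ∧ (x 0).2 ∈ S₂)
    (hstep1 : ∀ i, (x (i + 1)).1 ∈ S₁ ∧
      ∀ y₁ ∈ S₁, f ((x (i + 1)).1, (x i).2) ≤ f (y₁, (x i).2))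
    (hstep2 : ∀ i, (x (i + 1)).2 ∈ S₂ ∧
      ∀ y₂ ∈ S₂, f ((x (i + 1)).1, (x (i + 1)).2) ≤ f ((x (i + 1)).1, y₂))
    (xstar : X₁ × X₂) (hstar₁ : xstar.1 ∈ S₁) (hstar₂ : xstar.2 ∈ S₂)
    (hstarmin : ∀ y : X₁ × X₂, y.1 ∈ S₁ → y.2 ∈ S₂ → f xstar ≤ f y)
    (hstaruniq : ∀ y : X₁ × X₂, y.1 ∈ S₁ → y.2 ∈ S₂ → f y ≤ f xstar → y = xstar) :
    ∀ i : ℕ, f (x i) - f xstar ≤ (1 - σ₁ / L₁) ^ i * (f (x 0) - f xstar) := by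
  have hL0 : (0:ℝ) < L₁ := lt_of_lt_of_le hσ₁ hσL
  have feas : ∀ i, (x i).1 ∈ S₁ ∧ (x i).2 ∈ S₂ := by
    intro i
    cases i with
    | zero => exact hx0
    | succ j => exact ⟨(hstep1 j).1, (hstep2 j).1⟩
  have step : ∀ n : ℕ,
      f (x (n+1)) - f xstar ≤ (1 - σ₁/L₁) * (f (x n) - f xstar) := by
    intro n
    set u : X₁ × X₂ := x n with hu
    set w : X₁ × X₂ := x (n+1) with hw
    set v : X₁ × X₂ := (w.1, u.2) with hv
    set d : X₁ := xstar.1 - w.1 with hd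
    have hCnn : 0 ≤ p₁ (d, 0) := apply_nonneg _ _
    -- f v ≤ f u
    have hfvu : f v ≤ f u := by
      have h1 := (hstep1 n).2 u.1 (feas n).1
      rw [← hu, ← hw] at h1
      simpa [hv] using h1
    -- f w ≤ f v
    have hfwv : f w ≤ f v := by
      have h1 := (hstep2 n).2 u.2 (feas n).2
      rw [← hw] at h1
      simpa [hv] using h1
    -- block-1 first-order optimality at v toward xstar.1
    have hF3 : 0 ≤ (inner ℝ (f' v).1 d : ℝ) := by
      have hmin : ∀ t : ℝ, t ∈ Set.Icc (0:ℝ) 1 →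
          f v ≤ f (v + t • ((d, 0) : X₁ × X₂)) := by
        intro t ht
        have hmem : w.1 + t • d ∈ S₁ := by
          have h2 := hS₁c (feas (n+1)).1 hstar₁ (by linarith [ht.2] : (0:ℝ) ≤ 1 - t) ht.1
            (by ring)
          rw [← hw] at h2
          have he : (1-t) • w.1 + t • xstar.1 = w.1 + t • d := by
            rw [hd, smul_sub, sub_smul, one_smul]; abel
          rwa [he] at h2
        have h3 := (hstep1 n).2 (w.1 + t • d) hmem
        rw [← hu, ← hw] at h3
        have he2 : v + t • ((d, 0) : X₁ × X₂) = (w.1 + t • d, u.2) := by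
          rw [hv, Prod.smul_mk, smul_zero, Prod.mk_add_mk, add_zero]
        rw [he2]
        exact h3
      have h0 := dirDeriv_nonneg_of_min f Df hdiff v ((d, 0)) hmin
      rw [hgrad v ((d,0))] at h0
      simpa using h0
    -- block-2 first-order optimality at w
    have hF4 : ∀ z₂ ∈ S₂, 0 ≤ (inner ℝ (f' w).2 (z₂ - w.2) : ℝ) := by
      intro z₂ hz₂
      have hmin : ∀ t : ℝ, t ∈ Set.Icc (0:ℝ) 1 →
          f w ≤ f (w + t • ((0, z₂ - w.2) : X₁ × X₂)) := by
        intro t ht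
        have hmem : w.2 + t • (z₂ - w.2) ∈ S₂ := by
          have h2 := hS₂c (feas (n+1)).2 hz₂ (by linarith [ht.2] : (0:ℝ) ≤ 1 - t) ht.1
            (by ring)
          rw [← hw] at h2
          have he : (1-t) • w.2 + t • z₂ = w.2 + t • (z₂ - w.2) := by
            rw [smul_sub, sub_smul, one_smul]; abel
          rwa [he] at h2
        have h3 := (hstep2 n).2 (w.2 + t • (z₂ - w.2)) hmem
        rw [← hw] at h3
        have he2 : w + t • ((0, z₂ - w.2) : X₁ × X₂) = (w.1, w.2 + t • (z₂ - w.2)) := by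
          rw [Prod.smul_mk, smul_zero]
          exact Prod.ext_iff.mpr ⟨by simp, by simp⟩
        rw [he2]
        simpa using h3
      have h0 := dirDeriv_nonneg_of_min f Df hdiff w ((0, z₂ - w.2)) hmin
      rw [hgrad w ((0, z₂ - w.2))] at h0
      simpa using h0
    have hB : (0:ℝ) ≤ inner ℝ (f' w).2 (xstar.2 - w.2) := hF4 xstar.2 hstar₂
    have hBu : (0:ℝ) ≤ inner ℝ (f' w).2 (u.2 - w.2) := hF4 u.2 (feas n).2
    have hPC : p₁ (d, 0) ≤ p₁ (xstar - w) := by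
      have h1 := hp₁ (xstar - w)
      simpa [hd] using h1
    have ha := hconv w xstar
    rw [← hd] at ha
    -- master inequality
    have hmaster : ∀ τ : ℝ, 0 < τ →
        τ * (f w - f xstar) ≤ (f v - f w)
          + ((L₁ - σ₁)/2 * τ^2 - σ₁/2 * τ) * (p₁ (d, 0))^2 := by
      intro τ hτ
      have hdes := block1_descent f f' Df hdiff hgrad p₁ L₁ hlip v ((-τ) • d)
      have hzeq : v + (((-τ) • d, 0) : X₁ × X₂) = (w.1 + (-τ) • d, u.2) := by
        rw [hv, Prod.mk_add_mk, add_zero]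
      have hsm : p₁ (((-τ) • d, 0) : X₁ × X₂) = τ * p₁ (d, 0) := by
        have he : (((-τ) • d, (0:X₂)) : X₁ × X₂) = (-τ) • ((d, 0) : X₁ × X₂) := by
          rw [Prod.smul_mk, smul_zero]
        rw [he, map_smul_eq_mul, Real.norm_eq_abs, abs_neg, abs_of_pos hτ]
      rw [hzeq, hsm, real_inner_smul_right] at hdes
      have hcz := hconv w ((w.1 + (-τ) • d, u.2))
      have hsub : ((w.1 + (-τ) • d, u.2) : X₁ × X₂) - w = ((-τ) • d, u.2 - w.2) := by
        exact Prod.ext_iff.mpr ⟨by simp, by simp⟩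
      rw [hsub] at hcz
      have hfst : ((w.1 + (-τ) • d, u.2) : X₁ × X₂).1 - w.1 = (-τ) • d := by simp
      have hsnd : ((w.1 + (-τ) • d, u.2) : X₁ × X₂).2 - w.2 = u.2 - w.2 := by simp
      rw [hfst, hsnd, real_inner_smul_right] at hcz
      have hzw : τ * p₁ (d, 0) ≤ p₁ (((-τ) • d, u.2 - w.2) : X₁ × X₂) := by
        have h1 : p₁ (((-τ) • d, (0:X₂)) : X₁ × X₂) ≤ p₁ (((-τ) • d, u.2 - w.2) : X₁ × X₂) :=
          hp₁ (((-τ) • d, u.2 - w.2))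
        rwa [hsm] at h1
      have hZ2 : (τ * p₁ (d, 0))^2 ≤ (p₁ (((-τ) • d, u.2 - w.2) : X₁ × X₂))^2 :=
        pow_le_pow_left₀ (by positivity) hzw 2
      have hP2 : (p₁ (d, 0))^2 ≤ (p₁ (xstar - w))^2 := pow_le_pow_left₀ hCnn hPC 2
      have ha' : τ * (f w - f xstar)
          ≤ τ * (-(inner ℝ (f' w).1 d : ℝ) - σ₁/2 * (p₁ (d, 0))^2) := by
        apply mul_le_mul_of_nonneg_left _ hτ.le
        have hP2' : σ₁ * (p₁ (d, 0))^2 ≤ σ₁ * (p₁ (xstar - w))^2 :=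
          mul_le_mul_of_nonneg_left hP2 hσ₁.le
        linarith [ha, hB, hP2']
      refine le_trans ha' ?_
      have hZ2' : σ₁ * (τ * p₁ (d, 0))^2
          ≤ σ₁ * (p₁ (((-τ) • d, u.2 - w.2) : X₁ × X₂))^2 :=
        mul_le_mul_of_nonneg_left hZ2 hσ₁.le
      linarith [hcz, hdes, hBu, mul_nonneg hτ.le hF3, hZ2']
    rcases lt_or_eq_of_le hσL with hlt | heq
    · -- σ₁ < L₁
      have hLσ : (0:ℝ) < L₁ - σ₁ := by linarith
      have hτ : 0 < σ₁ / (L₁ - σ₁) := div_pos hσ₁ hLσ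
      have h3 := hmaster _ hτ
      have hcoef : ((L₁ - σ₁)/2 * (σ₁/(L₁-σ₁))^2 - σ₁/2 * (σ₁/(L₁-σ₁))) = 0 := by
        field_simp
        ring
      rw [hcoef, zero_mul, add_zero] at h3
      have h4 : σ₁/(L₁-σ₁) * (f w - f xstar) ≤ f u - f w := by linarith
      rw [show (1 - σ₁/L₁) = (L₁ - σ₁)/L₁ by field_simp]
      rw [div_mul_eq_mul_div, le_div_iff₀ hL0]
      have h5 := mul_le_mul_of_nonneg_left h4 hLσ.le
      have h6 : (L₁ - σ₁) * (σ₁/(L₁-σ₁) * (f w - f xstar)) = σ₁ * (f w - f xstar) := by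
        field_simp
      rw [h6] at h5
      nlinarith [h5]
    · -- σ₁ = L₁
      have hρ0 : (1 - σ₁/L₁) = 0 := by
        rw [heq, div_self (ne_of_gt hL0)]; ring
      rw [hρ0, zero_mul]
      by_contra hpos
      push_neg at hpos
      have hΔnn : 0 ≤ f v - f w := by linarith
      have hτpos : 0 < (f v - f w + 1)/(f w - f xstar) :=
        div_pos (by linarith) (by linarith)
      have h7 := hmaster _ hτpos
      have hcoefneg : ((L₁ - σ₁)/2 * ((f v - f w + 1)/(f w - f xstar))^2
          - σ₁/2 * ((f v - f w + 1)/(f w - f xstar))) * (p₁ (d, 0))^2 ≤ 0 := by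
        have hLσ0 : L₁ - σ₁ = 0 := by linarith
        rw [hLσ0]
        nlinarith [mul_nonneg (mul_nonneg hσ₁.le hτpos.le) (sq_nonneg (p₁ (d, 0)))]
      have h8 : (f v - f w + 1)/(f w - f xstar) * (f w - f xstar) ≤ f v - f w := by
        linarith
      rw [div_mul_cancel₀ _ (by linarith : f w - f xstar ≠ 0)] at h8
      linarith
  intro i
  induction i with
  | zero => simp
  | succ n ih =>
    have hρ : 0 ≤ 1 - σ₁ / L₁ := by
      have h1 : σ₁ / L₁ ≤ 1 := (div_le_one hL0).2 hσL
      linarith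
    calc f (x (n+1)) - f xstar ≤ (1 - σ₁/L₁) * (f (x n) - f xstar) := step n
      _ ≤ (1 - σ₁/L₁) * ((1 - σ₁/L₁)^n * (f (x 0) - f xstar)) :=
          mul_le_mul_of_nonneg_left ih hρ
      _ = (1 - σ₁/L₁)^(n+1) * (f (x 0) - f xstar) := by ring
end

section
/- Under the hypotheses of the alternating minimization convergence lemma (f σ₁-strongly convex w.r.t. |·|₁ with |(x₁,x₂)|₁ ≥ |(x₁,0)|₁, and ∇₁f L₁-Lipschitz w.r.t. |·|₁), the iterates satisfy the a posteriori bound f(xⁱ) - f(x⋆) ≤ (L₁/σ₁)(f(x^{i-1}) - f(xⁱ)) for every i ∈ ℕ. -/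
set_option maxHeartbeats 1000000


private lemma gauss_sum_real (n : ℕ) :
    ∑ k ∈ Finset.range n, ((k : ℝ) + 1) = n * (n + 1) / 2 := by
  induction n with
  | zero => simp
  | succ m ih => rw [Finset.sum_range_succ, ih]; push_cast; ring


private lemma aux_VI {E : Type*} [NormedAddCommGroup E] [NormedSpace ℝ E]
    (f : E → ℝ) (x v : E) (Dfx : E →L[ℝ] ℝ) (hdiff : HasFDerivAt f Dfx x)
    (hmin : ∀ t ∈ Set.Ioc (0:ℝ) 1, f x ≤ f (x + t • v)) : 0 ≤ Dfx v := by
  have hg : HasDerivAt (fun t : ℝ => x + t • v) v 0 := by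
    simpa using ((hasDerivAt_id (0:ℝ)).smul_const v).const_add x
  have hdiff' : HasFDerivAt f Dfx ((fun t : ℝ => x + t • v) 0) := by simpa using hdiff
  have hφ : HasDerivAt (fun t : ℝ => f (x + t • v)) (Dfx v) 0 := by
    exact hdiff'.comp_hasDerivAt 0 hg
  rw [hasDerivAt_iff_tendsto_slope] at hφ
  have h2 : Filter.Tendsto (slope (fun t : ℝ => f (x + t • v)) 0)
      (nhdsWithin 0 (Set.Ioi 0)) (nhds (Dfx v)) :=
    hφ.mono_left (nhdsWithin_mono _ (fun t ht => ne_of_gt ht))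
  refine ge_of_tendsto h2 ?_
  filter_upwards [Ioc_mem_nhdsGT_of_mem (Set.mem_Ico.mpr ⟨le_refl 0, one_pos⟩)] with t ht
  have h3 := hmin t ht
  have h4 : slope (fun t : ℝ => f (x + t • v)) 0 t = (f (x + t • v) - f (x + (0:ℝ) • v)) / t := by
    simp [slope_def_field]
  rw [h4]
  apply div_nonneg _ (le_of_lt ht.1)
  simp only [zero_smul, add_zero]
  linarith

private lemma aux_desc {X₁ X₂ : Type*} [NormedAddCommGroup X₁] [InnerProductSpace ℝ X₁]
    [NormedAddCommGroup X₂] [InnerProductSpace ℝ X₂]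
    (f : X₁ × X₂ → ℝ) (f' : X₁ × X₂ → X₁ × X₂)
    (p₁ : Seminorm ℝ (X₁ × X₂)) (σ₁ L₁ : ℝ) (hσ₁ : 0 ≤ σ₁) (hL₁ : 0 < L₁)
    (hconv : ∀ x y : X₁ × X₂,
      f x + ((inner ℝ (f' x).1 (y.1 - x.1) : ℝ) + (inner ℝ (f' x).2 (y.2 - x.2) : ℝ))
        + σ₁ / 2 * (p₁ (y - x)) ^ 2 ≤ f y)
    (hlip : ∀ (x : X₁ × X₂) (h : X₁),
      (inner ℝ ((f' (x + (h, 0))).1 - (f' x).1) h : ℝ) ≤ L₁ * (p₁ (h, 0)) ^ 2)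
    (x : X₁ × X₂) (h : X₁) :
    f (x + (h, 0)) ≤ f x + (inner ℝ (f' x).1 h : ℝ) + L₁ / 2 * (p₁ (h, (0:X₂))) ^ 2 := by
  set u : X₁ × X₂ := (h, (0:X₂)) with hu
  set P : ℝ := p₁ u with hPdef
  have hP0 : 0 ≤ P := apply_nonneg p₁ u
  -- scaled smul fact
  have hsmul : ∀ t : ℝ, t • u = ((t • h : X₁), (0:X₂)) := by
    intro t; simp [hu, Prod.smul_mk]
  have hpsmul : ∀ t : ℝ, 0 ≤ t → p₁ (t • u) = t * P := by
    intro t ht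
    rw [map_smul_eq_mul]
    simp [Real.norm_eq_abs, abs_of_nonneg ht, hPdef]
  have key : ∀ n : ℕ, 0 < n →
      f (x + u) ≤ f x + (inner ℝ (f' x).1 h : ℝ) + L₁ / 2 * P ^ 2 + L₁ * P ^ 2 / (2 * n) := by
    intro n hn
    have hn' : (0:ℝ) < n := by exact_mod_cast hn
    set g : ℕ → ℝ := fun k => f (x + ((k:ℝ)/n) • u) with hgdef
    have htel : ∑ k ∈ Finset.range n, (g (k+1) - g k) = g n - g 0 := Finset.sum_range_sub g n
    have hg0 : g 0 = f x := by simp [hgdef]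
    have hgn : g n = f (x + u) := by
      simp only [hgdef]
      rw [div_self (ne_of_gt hn'), one_smul]
    have hstep : ∀ k ∈ Finset.range n, g (k+1) - g k ≤
        (1/n) * (inner ℝ (f' x).1 h : ℝ) + L₁ * P^2 * ((k:ℝ)+1) / (n*n) := by
      intro k hk
      set s : ℝ := ((k:ℝ)+1)/n with hs
      set r : ℝ := ((k:ℝ))/n with hr
      have hs0 : 0 < s := by positivity
      have hsr : s - r = 1/n := by rw [hs, hr]; field_simp; ring
      -- convexity step
      have hc := hconv (x + s • u) (x + r • u)
      have hd1 : (x + r • u).1 - (x + s • u).1 = (r - s) • h := by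
        simp [hsmul, sub_smul]
      have hd2 : (x + r • u).2 - (x + s • u).2 = 0 := by
        simp [hsmul]
      rw [hd1, hd2] at hc
      simp only [inner_zero_right, add_zero] at hc
      have hσterm : 0 ≤ σ₁ / 2 * (p₁ (x + r • u - (x + s • u))) ^ 2 := by positivity
      have hinner : (inner ℝ (f' (x + s • u)).1 ((r - s) • h) : ℝ)
          = (r - s) * (inner ℝ (f' (x + s • u)).1 h : ℝ) := real_inner_smul_right _ _ _
      -- Lipschitz step : inner ℝ (f' (x+s•u)).1 h ≤ inner ℝ (f' x).1 h + L₁ * s * P^2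
      have hlips : (inner ℝ (f' (x + s • u)).1 h : ℝ) ≤ (inner ℝ (f' x).1 h : ℝ) + L₁ * s * P^2 := by
        have h1 := hlip x (s • h)
        have hx2 : x + ((s • h : X₁), (0:X₂)) = x + s • u := by rw [hsmul]
        rw [hx2] at h1
        have h2 : p₁ ((s • h : X₁), (0:X₂)) = s * P := by
          rw [← hsmul]; exact hpsmul s hs0.le
        rw [h2] at h1
        rw [inner_sub_left, real_inner_smul_right, real_inner_smul_right] at h1
        have h3 : s * ((inner ℝ (f' (x + s • u)).1 h : ℝ) - (inner ℝ (f' x).1 h : ℝ))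
            ≤ s * (L₁ * s * P^2) := by nlinarith
        have := le_of_mul_le_mul_left h3 hs0
        linarith
      have hgk : g (k+1) - g k ≤ (s - r) * (inner ℝ (f' (x + s • u)).1 h : ℝ) := by
        have hg1 : g (k+1) = f (x + s • u) := by
          simp only [hgdef, Nat.cast_add, Nat.cast_one, ← hs]
        have hrg : g k = f (x + r • u) := by simp only [hgdef, ← hr]
        rw [hg1, hrg]
        have hflip : (inner ℝ (f' (x + s • u)).1 ((r - s) • h) : ℝ)
            = -((s - r) * (inner ℝ (f' (x + s • u)).1 h : ℝ)) := by
          rw [real_inner_smul_right]; ring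
        rw [hflip] at hc
        linarith
      calc g (k+1) - g k ≤ (s - r) * (inner ℝ (f' (x + s • u)).1 h : ℝ) := hgk
        _ ≤ (s - r) * ((inner ℝ (f' x).1 h : ℝ) + L₁ * s * P^2) := by
            apply mul_le_mul_of_nonneg_left hlips
            rw [hsr]; positivity
        _ = (1/n) * (inner ℝ (f' x).1 h : ℝ) + L₁ * P^2 * ((k:ℝ)+1) / (n*n) := by
            rw [hsr, hs]; field_simp
    have hsum := Finset.sum_le_sum hstep
    rw [htel, hg0, hgn] at hsum
    have hrhs : ∑ k ∈ Finset.range n, ((1/n) * (inner ℝ (f' x).1 h : ℝ)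
        + L₁ * P^2 * ((k:ℝ)+1) / (n*n))
        = (inner ℝ (f' x).1 h : ℝ) + L₁ * P^2 * (n+1) / (2*n) := by
      rw [Finset.sum_add_distrib, Finset.sum_const, Finset.card_range]
      have : ∑ k ∈ Finset.range n, L₁ * P^2 * ((k:ℝ)+1) / (n*n)
          = (L₁ * P^2 / (n*n)) * ∑ k ∈ Finset.range n, ((k:ℝ)+1) := by
        rw [Finset.mul_sum]; apply Finset.sum_congr rfl; intro k _; ring
      rw [this, gauss_sum_real]
      have hn0 : (n:ℝ) ≠ 0 := ne_of_gt hn'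
      field_simp
      linear_combination (2 * inner ℝ (f' x).1 h * (n:ℝ)) * (mul_inv_cancel₀ hn0)
    rw [hrhs] at hsum
    have : L₁ * P^2 * (n+1) / (2*n) = L₁/2 * P^2 + L₁ * P^2/(2*n) := by
      field_simp
    linarith [hsum, this.le]
  -- conclude by letting n → ∞
  refine le_of_forall_pos_le_add ?_
  intro ε hε
  obtain ⟨n, hngt⟩ := exists_nat_gt (L₁ * P^2 / (2 * ε))
  have hn0 : 0 < n := by
    rcases Nat.eq_zero_or_pos n with h0 | h0
    · exfalso
      rw [h0] at hngt
      simp only [Nat.cast_zero] at hngt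
      have hnn : (0:ℝ) ≤ L₁ * P ^ 2 / (2 * ε) := by positivity
      linarith
    · exact h0
  have hk := key n hn0
  have hn' : (0:ℝ) < n := by exact_mod_cast hn0
  have : L₁ * P^2 / (2 * n) ≤ ε := by
    rw [div_le_iff₀ (by positivity)]
    rw [div_lt_iff₀ (by positivity)] at hngt
    nlinarith
  linarith




/-- A posteriori estimate for exact alternating minimization.
`f` is differentiable on the product of Hilbert spaces `X₁ × X₂` with gradient blocks
`(f' x).1, (f' x).2`; `f` is `σ₁`-strongly convex with respect to a seminorm `p₁`
satisfying `p₁ (x₁, 0) ≤ p₁ (x₁, x₂)`, and the first gradient block is `L₁`-Lipschitz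
with respect to `p₁`. Then the alternating minimization iterates over the convex feasible
set `S₁ ×ˢ S₂` satisfy `f(xⁱ) - f(x⋆) ≤ (L₁/σ₁)(f(x^{i-1}) - f(xⁱ))`. -/
theorem alternating_minimization_a_posteriori
    {X₁ X₂ : Type*} [NormedAddCommGroup X₁] [InnerProductSpace ℝ X₁] [CompleteSpace X₁]
    [NormedAddCommGroup X₂] [InnerProductSpace ℝ X₂] [CompleteSpace X₂]
    (f : X₁ × X₂ → ℝ) (f' : X₁ × X₂ → X₁ × X₂) (Df : X₁ × X₂ → (X₁ × X₂) →L[ℝ] ℝ)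
    (hdiff : ∀ x, HasFDerivAt f (Df x) x)
    (hgrad : ∀ x v, Df x v = (inner ℝ (f' x).1 v.1 : ℝ) + (inner ℝ (f' x).2 v.2 : ℝ))
    (p₁ : Seminorm ℝ (X₁ × X₂))
    (hp₁ : ∀ x : X₁ × X₂, p₁ (x.1, 0) ≤ p₁ x)
    (σ₁ L₁ : ℝ) (hσ₁ : 0 < σ₁) (hσL : σ₁ ≤ L₁)
    (hconv : ∀ x y : X₁ × X₂,
      f x + ((inner ℝ (f' x).1 (y.1 - x.1) : ℝ) + (inner ℝ (f' x).2 (y.2 - x.2) : ℝ))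
        + σ₁ / 2 * (p₁ (y - x)) ^ 2 ≤ f y)
    (hlip : ∀ (x : X₁ × X₂) (h : X₁),
      (inner ℝ ((f' (x + (h, 0))).1 - (f' x).1) h : ℝ) ≤ L₁ * (p₁ (h, 0)) ^ 2)
    (S₁ : Set X₁) (S₂ : Set X₂)
    (hS₁ : S₁.Nonempty) (hS₂ : S₂.Nonempty) (hS₁c : Convex ℝ S₁) (hS₂c : Convex ℝ S₂)
    (x : ℕ → X₁ × X₂) (hx0 : (x 0).1 ∈ S₁ ∧ (x 0).2 ∈ S₂)
    (hstep1 : ∀ i, (x (i + 1)).1 ∈ S₁ ∧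
      ∀ y₁ ∈ S₁, f ((x (i + 1)).1, (x i).2) ≤ f (y₁, (x i).2))
    (hstep2 : ∀ i, (x (i + 1)).2 ∈ S₂ ∧
      ∀ y₂ ∈ S₂, f ((x (i + 1)).1, (x (i + 1)).2) ≤ f ((x (i + 1)).1, y₂))
    (xstar : X₁ × X₂) (hstar₁ : xstar.1 ∈ S₁) (hstar₂ : xstar.2 ∈ S₂)
    (hstarmin : ∀ y : X₁ × X₂, y.1 ∈ S₁ → y.2 ∈ S₂ → f xstar ≤ f y)
    (hstaruniq : ∀ y : X₁ × X₂, y.1 ∈ S₁ → y.2 ∈ S₂ → f y ≤ f xstar → y = xstar) :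
    ∀ i : ℕ, f (x (i + 1)) - f xstar ≤ L₁ / σ₁ * (f (x i) - f (x (i + 1))) := by
  -- auxiliary facts available from previous file: aux_VI, aux_desc (inlined later)
  have hL₁ : (0:ℝ) < L₁ := lt_of_lt_of_le hσ₁ hσL
  have hfeas : ∀ j, (x j).1 ∈ S₁ ∧ (x j).2 ∈ S₂ := by
    intro j
    cases j with
    | zero => exact hx0
    | succ k => exact ⟨(hstep1 k).1, (hstep2 k).1⟩
  intro i
  set a : X₁ × X₂ := x i with ha
  set b : X₁ × X₂ := x (i+1) with hb
  set z : X₁ × X₂ := (b.1, a.2) with hz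
  set d : X₁ := xstar.1 - b.1 with hd
  set t₀ : ℝ := σ₁ / L₁ with ht₀def
  have ht₀ : 0 < t₀ := by positivity
  have h1min : ∀ y₁ ∈ S₁, f z ≤ f (y₁, a.2) := (hstep1 i).2
  have h2min : ∀ y₂ ∈ S₂, f b ≤ f (b.1, y₂) := by
    intro y₂ hy₂
    have := (hstep2 i).2 y₂ hy₂
    simpa using this
  -- block-1 variational inequality at z
  have hVIz : 0 ≤ (inner ℝ (f' z).1 d : ℝ) := by
    have hmin : ∀ t ∈ Set.Ioc (0:ℝ) 1, f z ≤ f (z + t • ((d, (0:X₂)) : X₁ × X₂)) := by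
      intro t ht
      have hzz : z + t • ((d, (0:X₂)) : X₁ × X₂) = ((b.1 + t • d : X₁), a.2) := by
        simp [hz, Prod.ext_iff]
      rw [hzz]
      apply h1min
      have hmem := hS₁c (hfeas (i+1)).1 hstar₁ (by linarith [ht.2, ht.1] : (0:ℝ) ≤ 1 - t)
        ht.1.le (by ring)
      have : b.1 + t • d = (1-t) • b.1 + t • xstar.1 := by
        rw [hd, smul_sub, sub_smul, one_smul]; abel
      rw [this]
      exact hmem
    have := aux_VI f z ((d, (0:X₂)) : X₁ × X₂) (Df z) (hdiff z) hmin
    rw [hgrad] at this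
    simpa using this
  -- block-2 variational inequality at b
  have hVIb : ∀ y₂ ∈ S₂, 0 ≤ (inner ℝ (f' b).2 (y₂ - b.2) : ℝ) := by
    intro y₂ hy₂
    have hmin : ∀ t ∈ Set.Ioc (0:ℝ) 1, f b ≤ f (b + t • (((0:X₁), y₂ - b.2) : X₁ × X₂)) := by
      intro t ht
      have hbb : b + t • (((0:X₁), y₂ - b.2) : X₁ × X₂) = (b.1, b.2 + t • (y₂ - b.2)) := by
        simp [Prod.ext_iff]
      rw [hbb]
      apply h2min
      have hmem := hS₂c (hfeas (i+1)).2 hy₂ (by linarith [ht.2, ht.1] : (0:ℝ) ≤ 1 - t)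
        ht.1.le (by ring)
      have : b.2 + t • (y₂ - b.2) = (1-t) • b.2 + t • y₂ := by
        rw [smul_sub, sub_smul, one_smul]; abel
      rw [this]
      exact hmem
    have := aux_VI f b (((0:X₁), y₂ - b.2) : X₁ × X₂) (Df b) (hdiff b) hmin
    rw [hgrad] at this
    simpa using this
  set A : ℝ := (inner ℝ (f' b).1 d : ℝ) with hA
  set P : ℝ := p₁ ((d, (0:X₂)) : X₁ × X₂) with hP
  have hP0 : 0 ≤ P := apply_nonneg p₁ _
  -- inequality (i)
  have hi1 : f b - f xstar ≤ -A - σ₁/2 * P^2 := by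
    have hc := hconv b xstar
    have h2 := hVIb xstar.2 hstar₂
    have hp := hp₁ (xstar - b)
    have hfst : (xstar - b).1 = d := by simp [hd]
    rw [hfst] at hp
    have hsq : P^2 ≤ (p₁ (xstar - b))^2 := by
      apply pow_le_pow_left₀ hP0 hp
    have hsq' : σ₁/2 * P^2 ≤ σ₁/2 * (p₁ (xstar - b))^2 :=
      mul_le_mul_of_nonneg_left hsq (by positivity)
    have hfst2 : xstar.1 - b.1 = d := hd.symm
    rw [hfst2] at hc
    linarith
  -- inequality (ii): convexity from b to y' := (b.1 - t₀ • d, a.2)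
  set h₀ : X₁ := -(t₀ • d) with hh₀
  set y' : X₁ × X₂ := ((b.1 + h₀ : X₁), a.2) with hy'
  have hi2 : f b + (-t₀) * A ≤ f y' := by
    have hc := hconv b y'
    have h2 := hVIb a.2 (hfeas i).2
    have hc1 : y'.1 - b.1 = h₀ := by simp [hy']
    have hc2 : y'.2 - b.2 = a.2 - b.2 := by simp [hy']
    rw [hc1, hc2] at hc
    have hin : (inner ℝ (f' b).1 h₀ : ℝ) = (-t₀) * A := by
      rw [hh₀, inner_neg_right, real_inner_smul_right, hA]; ring
    rw [hin] at hc
    have hσterm : 0 ≤ σ₁/2 * (p₁ (y' - b))^2 := by positivity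
    linarith
  -- inequality (iii): descent lemma at z
  have hi3 : f y' ≤ f z + L₁/2 * (t₀ * P)^2 := by
    have hdsc := aux_desc f f' p₁ σ₁ L₁ hσ₁.le hL₁ hconv hlip z h₀
    have hzy : z + ((h₀ : X₁), (0:X₂)) = y' := by
      simp [hz, hy', Prod.ext_iff]
    rw [hzy] at hdsc
    have hin : (inner ℝ (f' z).1 h₀ : ℝ) = -(t₀ * (inner ℝ (f' z).1 d : ℝ)) := by
      rw [hh₀, inner_neg_right, real_inner_smul_right]
    have hpin : p₁ ((h₀, (0:X₂)) : X₁ × X₂) = t₀ * P := by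
      have : ((h₀, (0:X₂)) : X₁ × X₂) = (-t₀) • ((d, (0:X₂)) : X₁ × X₂) := by
        simp [hh₀, Prod.ext_iff]
      rw [this, map_smul_eq_mul, hP]
      simp [Real.norm_eq_abs, abs_of_nonneg ht₀.le, abs_of_pos ht₀]
    rw [hin, hpin] at hdsc
    have : -(t₀ * (inner ℝ (f' z).1 d : ℝ)) ≤ 0 := by
      have := mul_nonneg ht₀.le hVIz
      linarith
    linarith
  -- combine: t₀ * (f b - f xstar) ≤ f z - f b
  have hLt₀ : L₁ * t₀ = σ₁ := by
    rw [ht₀def]; field_simp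
  have hkey : t₀ * (f b - f xstar) ≤ f z - f b := by
    have hm := mul_le_mul_of_nonneg_left hi1 ht₀.le
    have hexp : L₁/2 * (t₀ * P)^2 = t₀ * (σ₁/2 * P^2) := by
      have : L₁/2 * (t₀ * P)^2 = (L₁ * t₀) * (t₀ * P^2) / 2 := by ring
      rw [this, hLt₀]; ring
    nlinarith [hi2, hi3, hm, hexp]
  -- finish
  have hza : f z ≤ f a := by
    have := h1min a.1 (hfeas i).1
    simpa using this
  have hpos : (0:ℝ) ≤ L₁ / σ₁ := by positivity
  have hinv : L₁ / σ₁ * t₀ = 1 := by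
    rw [ht₀def]; field_simp
  have hfinal : f b - f xstar ≤ L₁ / σ₁ * (f z - f b) := by
    have := mul_le_mul_of_nonneg_left hkey hpos
    calc f b - f xstar = L₁ / σ₁ * (t₀ * (f b - f xstar)) := by
          rw [← mul_assoc, hinv, one_mul]
      _ ≤ L₁ / σ₁ * (f z - f b) := this
  calc f (x (i+1)) - f xstar = f b - f xstar := by rw [hb]
    _ ≤ L₁ / σ₁ * (f z - f b) := hfinal
    _ ≤ L₁ / σ₁ * (f a - f b) := by
        apply mul_le_mul_of_nonneg_left _ hpos
        linarith
    _ = L₁ / σ₁ * (f (x i) - f (x (i+1))) := by rw [ha, hb]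
end

section
/- Let H be a real Hilbert space, E₁ : V₁ → [0,∞) strictly convex and continuously differentiable on a Hilbert space V₁, E₂ : Ṽ → [0,∞) convex and continuously differentiable, Λ : V₁ × V₂ → Ṽ affine with linear parts Λ₁, Λ₂, and E(x₁,x₂) = E₁(x₁) + E₂(Λ(x₁,x₂)). For fixed t and x₂, let x₁⋆(x₂) be the unique minimizer of y₁ ↦ E(y₁, x₂) - ⟨P₁, y₁⟩ over V₁, and define the reduced energy E_red(x₂) := E(x₁⋆(x₂), x₂) - ⟨P₁, x₁⋆(x₂)⟩. Then ∇E_red(x₂) = Λ₂⋆ ∇E₂(Λ(x₁⋆(x₂), x₂)), i.e. the derivative of the reduced energy in direction y₂ equals ⟨∇E₂(Λ(x₁⋆(x₂), x₂)), Λ₂ y₂⟩. -/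
/-- Envelope-theorem identity for the reduced energy. With
`E(x₁,x₂) = E₁(x₁) + E₂(Λ(x₁,x₂))`, `Λ` affine with linear parts `Λ₁, Λ₂`,
`x₁⋆(x₂)` the unique (differentiable in `x₂`) minimizer of `y₁ ↦ E(y₁,x₂) - ⟨P₁,y₁⟩`
characterized by the optimality condition
`∇E₁(x₁⋆) + Λ₁⋆ ∇E₂(Λ(x₁⋆,x₂)) = P₁`, the reduced energy
`E_red(x₂) = E(x₁⋆(x₂),x₂) - ⟨P₁,x₁⋆(x₂)⟩` has gradient
`∇E_red(x₂) = Λ₂⋆ ∇E₂(Λ(x₁⋆(x₂),x₂))`. -/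
theorem reduced_energy_gradient
    {V₁ V₂ W : Type*}
    [NormedAddCommGroup V₁] [InnerProductSpace ℝ V₁] [CompleteSpace V₁]
    [NormedAddCommGroup V₂] [InnerProductSpace ℝ V₂] [CompleteSpace V₂]
    [NormedAddCommGroup W] [InnerProductSpace ℝ W] [CompleteSpace W]
    (E₁ : V₁ → ℝ) (E₁' : V₁ → V₁) (hE₁ : ∀ x, HasGradientAt E₁ (E₁' x) x)
    (hE₁conv : StrictConvexOn ℝ Set.univ E₁) (hE₁nn : ∀ x, 0 ≤ E₁ x)
    (E₂ : W → ℝ) (E₂' : W → W) (hE₂ : ∀ x, HasGradientAt E₂ (E₂' x) x)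
    (hE₂conv : ConvexOn ℝ Set.univ E₂) (hE₂nn : ∀ x, 0 ≤ E₂ x)
    (Λ : V₁ × V₂ → W) (Λ₁ : V₁ →L[ℝ] W) (Λ₂ : V₂ →L[ℝ] W)
    (hΛ : ∀ x y : V₁ × V₂, Λ x - Λ y = Λ₁ (x.1 - y.1) + Λ₂ (x.2 - y.2))
    (P₁ : V₁)
    (xstar : V₂ → V₁) (D : V₂ → V₂ →L[ℝ] V₁)
    (hxstar_diff : ∀ x₂, HasFDerivAt xstar (D x₂) x₂)
    (hxstar_min : ∀ x₂ : V₂, ∀ y₁ : V₁,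
      E₁ (xstar x₂) + E₂ (Λ (xstar x₂, x₂)) - (inner ℝ P₁ (xstar x₂) : ℝ) ≤
        E₁ y₁ + E₂ (Λ (y₁, x₂)) - (inner ℝ P₁ y₁ : ℝ))
    (hopt : ∀ x₂ : V₂,
      E₁' (xstar x₂) + ContinuousLinearMap.adjoint Λ₁ (E₂' (Λ (xstar x₂, x₂))) = P₁)
    (Ered : V₂ → ℝ)
    (hEred : ∀ x₂, Ered x₂ =
      E₁ (xstar x₂) + E₂ (Λ (xstar x₂, x₂)) - (inner ℝ P₁ (xstar x₂) : ℝ)) :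
    ∀ x₂ : V₂,
      HasGradientAt Ered (ContinuousLinearMap.adjoint Λ₂ (E₂' (Λ (xstar x₂, x₂)))) x₂ := by
  intro x₂
  have hrep : ∀ p : V₁ × V₂, Λ p = Λ₁ p.1 + Λ₂ p.2 + Λ (0, 0) := by
    intro p
    have h := hΛ p (0, 0)
    simp only [sub_zero] at h
    have := eq_add_of_sub_eq h
    simpa using this
  -- the map y ↦ Λ (xstar y, y)
  have hg : HasFDerivAt (fun y => Λ (xstar y, y))
      ((Λ₁.comp (D x₂)) + Λ₂) x₂ := by
    have h1 : HasFDerivAt (fun y => Λ₁ (xstar y) + Λ₂ y + Λ (0, 0))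
        ((Λ₁.comp (D x₂)) + Λ₂) x₂ := by
      exact ((Λ₁.hasFDerivAt.comp x₂ (hxstar_diff x₂)).add Λ₂.hasFDerivAt).add_const _
    exact h1.congr_of_eventuallyEq (Filter.Eventually.of_forall fun y => hrep (xstar y, y))
  set w := E₂' (Λ (xstar x₂, x₂)) with hw
  have hF : HasFDerivAt Ered
      ((((InnerProductSpace.toDual ℝ V₁) (E₁' (xstar x₂))).comp (D x₂)
        + ((InnerProductSpace.toDual ℝ W) w).comp ((Λ₁.comp (D x₂)) + Λ₂))
        - ((InnerProductSpace.toDual ℝ V₁) P₁).comp (D x₂)) x₂ := by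
    have h1 : HasFDerivAt (fun y => E₁ (xstar y))
        (((InnerProductSpace.toDual ℝ V₁) (E₁' (xstar x₂))).comp (D x₂)) x₂ :=
      (hE₁ (xstar x₂)).hasFDerivAt.comp x₂ (hxstar_diff x₂)
    have h2 : HasFDerivAt (fun y => E₂ (Λ (xstar y, y)))
        (((InnerProductSpace.toDual ℝ W) w).comp ((Λ₁.comp (D x₂)) + Λ₂)) x₂ :=
      (hE₂ _).hasFDerivAt.comp x₂ hg
    have h3 : HasFDerivAt (fun y => (inner ℝ P₁ (xstar y) : ℝ))
        (((InnerProductSpace.toDual ℝ V₁) P₁).comp (D x₂)) x₂ := by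
      have : HasFDerivAt (fun z : V₁ => (inner ℝ P₁ z : ℝ))
          ((InnerProductSpace.toDual ℝ V₁) P₁) (xstar x₂) :=
        ((InnerProductSpace.toDual ℝ V₁) P₁).hasFDerivAt
      exact this.comp x₂ (hxstar_diff x₂)
    have := ((h1.add h2).sub h3)
    exact this.congr_of_eventuallyEq (Filter.Eventually.of_forall fun y => (hEred y))
  rw [hasGradientAt_iff_hasFDerivAt]
  refine hF.congr_fderiv ?_
  ext v
  simp only [ContinuousLinearMap.coe_sub', ContinuousLinearMap.coe_add',
    ContinuousLinearMap.coe_comp', Function.comp_apply, Pi.add_apply, Pi.sub_apply,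
    InnerProductSpace.toDual_apply_apply, ContinuousLinearMap.add_apply]
  have hadj1 : (inner ℝ w (Λ₁ (D x₂ v)) : ℝ) = inner ℝ (ContinuousLinearMap.adjoint Λ₁ w) (D x₂ v) :=
    (ContinuousLinearMap.adjoint_inner_left Λ₁ (D x₂ v) w).symm
  have hadj2 : (inner ℝ w (Λ₂ v) : ℝ) = inner ℝ (ContinuousLinearMap.adjoint Λ₂ w) v :=
    (ContinuousLinearMap.adjoint_inner_left Λ₂ v w).symm
  have hop := hopt x₂
  have : (inner ℝ (E₁' (xstar x₂) + ContinuousLinearMap.adjoint Λ₁ w) (D x₂ v) : ℝ)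
      = inner ℝ P₁ (D x₂ v) := by rw [hop]
  rw [inner_add_left] at this
  rw [inner_add_right, hadj1, hadj2]
  linarith
end

section
/- In the setting of the reduced energy E_red(x₂) = E(x₁⋆(x₂), x₂) - ⟨P₁, x₁⋆(x₂)⟩ with E(x₁,x₂) = E₁(x₁) + E₂(Λ(x₁,x₂)), E₁ and E₂ convex differentiable, and Λ affine, the operator ∇E_red is monotone: ⟨∇E_red(x₂) - ∇E_red(y₂), x₂ - y₂⟩ ≥ 0 for all x₂, y₂ ∈ V₂. Consequently E_red is convex. -/
open Filter Set Topology

lemma grad_ineq {V : Type*} [NormedAddCommGroup V] [InnerProductSpace ℝ V] [CompleteSpace V]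
    (f : V → ℝ) (f' : V) (x y : V) (h : HasGradientAt f f' x)
    (hc : ConvexOn ℝ Set.univ f) :
    f x + (inner ℝ f' (y - x) : ℝ) ≤ f y := by
  set d : ℝ := inner ℝ f' (y - x) with hd
  set g : ℝ → ℝ := fun t => f (x + t • (y - x)) with hg
  have hcurve : HasDerivAt (fun t : ℝ => x + t • (y - x)) (y - x) 0 := by
    simpa using ((hasDerivAt_id (0:ℝ)).smul_const (y - x)).const_add x
  have hgd : HasDerivAt g d 0 := by
    have hx0 : x + (0:ℝ) • (y - x) = x := by simp
    have hF : HasFDerivAt f (InnerProductSpace.toDual ℝ V f')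
        ((fun t : ℝ => x + t • (y - x)) 0) := by
      simpa [hx0] using h.hasFDerivAt
    have h2 := hF.comp_hasDerivAt 0 hcurve
    simpa [g, Function.comp_def, InnerProductSpace.toDual_apply_apply, hd] using h2
  have hslope : Tendsto (slope g 0) (𝓝[>] (0:ℝ)) (𝓝 d) :=
    (hasDerivAt_iff_tendsto_slope.mp hgd).mono_left
      (nhdsWithin_mono _ (fun t ht => ne_of_gt ht))
  have hbound : ∀ᶠ t in 𝓝[>] (0:ℝ), slope g 0 t ≤ g 1 - g 0 := by
    filter_upwards [Ioo_mem_nhdsGT_of_mem (by norm_num : (0:ℝ) ∈ Ico 0 1)] with t ht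
    have h01 : (0:ℝ) < t := ht.1
    have ht1 : t < 1 := ht.2
    have hconv := hc.2 (mem_univ x) (mem_univ y) (by linarith : (0:ℝ) ≤ 1 - t)
      (le_of_lt h01) (by ring)
    have hgt : g t ≤ (1 - t) * f x + t * f y := by
      have : x + t • (y - x) = (1 - t) • x + t • y := by
        module
      simpa [g, this] using hconv
    have hg0 : g 0 = f x := by simp [g]
    have hg1 : g 1 = f y := by simp [g]
    have hs : slope g 0 t = (g t - g 0) / t := by
      rw [slope_def_field]; ring_nf
    rw [hs, div_le_iff₀ h01]
    nlinarith [hgt, hg0, hg1]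
  have : d ≤ g 1 - g 0 := le_of_tendsto hslope hbound
  have hg0 : g 0 = f x := by simp [g]
  have hg1 : g 1 = f y := by simp [g]
  rw [hg0, hg1] at this
  linarith

lemma grad_mono {V : Type*} [NormedAddCommGroup V] [InnerProductSpace ℝ V] [CompleteSpace V]
    (f : V → ℝ) (f' : V → V) (hf : ∀ x, HasGradientAt f (f' x) x)
    (hc : ConvexOn ℝ Set.univ f) (x y : V) :
    0 ≤ (inner ℝ (f' x - f' y) (x - y) : ℝ) := by
  have h1 := grad_ineq f (f' x) x y (hf x) hc
  have h2 := grad_ineq f (f' y) y x (hf y) hc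
  have e1 : (inner ℝ (f' x - f' y) (x - y) : ℝ)
      = -(inner ℝ (f' x) (y - x) : ℝ) - (inner ℝ (f' y) (x - y) : ℝ) := by
    rw [inner_sub_left]
    rw [show y - x = -(x - y) by abel, inner_neg_right]
    ring
  rw [e1]; linarith


/-- Monotonicity of the gradient of the reduced energy, hence convexity
of `E_red`. In the setting of the envelope lemma (E = E₁ + E₂ ∘ Λ with E₁, E₂ convex
differentiable and Λ affine), the map `G x₂ = Λ₂⋆ ∇E₂(Λ(x₁⋆(x₂),x₂))`, which is the
gradient of `E_red`, is monotone, and consequently `E_red` is convex. -/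
theorem reduced_energy_gradient_monotone
    {V₁ V₂ W : Type*}
    [NormedAddCommGroup V₁] [InnerProductSpace ℝ V₁] [CompleteSpace V₁]
    [NormedAddCommGroup V₂] [InnerProductSpace ℝ V₂] [CompleteSpace V₂]
    [NormedAddCommGroup W] [InnerProductSpace ℝ W] [CompleteSpace W]
    (E₁ : V₁ → ℝ) (E₁' : V₁ → V₁) (hE₁ : ∀ x, HasGradientAt E₁ (E₁' x) x)
    (hE₁conv : ConvexOn ℝ Set.univ E₁)
    (E₂ : W → ℝ) (E₂' : W → W) (hE₂ : ∀ x, HasGradientAt E₂ (E₂' x) x)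
    (hE₂conv : ConvexOn ℝ Set.univ E₂)
    (Λ : V₁ × V₂ → W) (Λ₁ : V₁ →L[ℝ] W) (Λ₂ : V₂ →L[ℝ] W)
    (hΛ : ∀ x y : V₁ × V₂, Λ x - Λ y = Λ₁ (x.1 - y.1) + Λ₂ (x.2 - y.2))
    (P₁ : V₁)
    (xstar : V₂ → V₁)
    (hxstar_min : ∀ x₂ : V₂, ∀ y₁ : V₁,
      E₁ (xstar x₂) + E₂ (Λ (xstar x₂, x₂)) - (inner ℝ P₁ (xstar x₂) : ℝ) ≤
        E₁ y₁ + E₂ (Λ (y₁, x₂)) - (inner ℝ P₁ y₁ : ℝ))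
    (hopt : ∀ x₂ : V₂,
      E₁' (xstar x₂) + ContinuousLinearMap.adjoint Λ₁ (E₂' (Λ (xstar x₂, x₂))) = P₁)
    (G : V₂ → V₂)
    (hG : ∀ x₂, G x₂ = ContinuousLinearMap.adjoint Λ₂ (E₂' (Λ (xstar x₂, x₂))))
    (Ered : V₂ → ℝ)
    (hEred : ∀ x₂, Ered x₂ =
      E₁ (xstar x₂) + E₂ (Λ (xstar x₂, x₂)) - (inner ℝ P₁ (xstar x₂) : ℝ))
    (hEredgrad : ∀ x₂, HasGradientAt Ered (G x₂) x₂) :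
    (∀ x₂ y₂ : V₂, 0 ≤ (inner ℝ (G x₂ - G y₂) (x₂ - y₂) : ℝ)) ∧
      ConvexOn ℝ Set.univ Ered := by
  constructor
  · intro x₂ y₂
    set p := xstar x₂ with hp
    set q := xstar y₂ with hq
    set u := Λ (p, x₂) with hu
    set v := Λ (q, y₂) with hv
    have hΛuv : u - v = Λ₁ (p - q) + Λ₂ (x₂ - y₂) := hΛ (p, x₂) (q, y₂)
    have hΛ₂ : Λ₂ (x₂ - y₂) = (u - v) - Λ₁ (p - q) := by
      rw [hΛuv]; abel
    have hadj1 : ContinuousLinearMap.adjoint Λ₁ (E₂' u) -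
        ContinuousLinearMap.adjoint Λ₁ (E₂' v) = E₁' q - E₁' p := by
      have h1 := hopt x₂
      have h2 := hopt y₂
      rw [← hp, ← hu] at h1
      rw [← hq, ← hv] at h2
      have : E₁' p + ContinuousLinearMap.adjoint Λ₁ (E₂' u) =
          E₁' q + ContinuousLinearMap.adjoint Λ₁ (E₂' v) := by rw [h1, h2]
      linear_combination (norm := abel1) this
    have hA : (inner ℝ (E₂' u - E₂' v) (Λ₁ (p - q)) : ℝ) =
        (inner ℝ (E₁' q - E₁' p) (p - q) : ℝ) := by
      rw [← ContinuousLinearMap.adjoint_inner_left, map_sub, hadj1]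
    have key : (inner ℝ (G x₂ - G y₂) (x₂ - y₂) : ℝ) =
        (inner ℝ (E₂' u - E₂' v) (u - v) : ℝ) +
          (inner ℝ (E₁' p - E₁' q) (p - q) : ℝ) := by
      rw [hG x₂, hG y₂, ← hp, ← hq, ← hu, ← hv, ← map_sub,
        ContinuousLinearMap.adjoint_inner_left, hΛ₂, inner_sub_right, hA]
      rw [show E₁' q - E₁' p = -(E₁' p - E₁' q) by abel, inner_neg_left]
      ring
    rw [key]
    have m1 := grad_mono E₂ E₂' hE₂ hE₂conv u v
    have m2 := grad_mono E₁ E₁' hE₁ hE₁conv p q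
    linarith
  · refine ⟨convex_univ, ?_⟩
    intro x₂ _ y₂ _ a b ha hb hab
    set p := xstar x₂ with hp
    set q := xstar y₂ with hq
    set z := a • p + b • q with hz
    set c := a • x₂ + b • y₂ with hc
    have hrep : ∀ r : V₁ × V₂, Λ r = (Λ₁ r.1 + Λ₂ r.2) + Λ (0, 0) := by
      intro r
      have h := hΛ r (0, 0)
      simp only [sub_zero] at h
      exact sub_eq_iff_eq_add.mp h
    have hΛaff : Λ (z, c) = a • Λ (p, x₂) + b • Λ (q, y₂) := by
      rw [hrep (z, c), hrep (p, x₂), hrep (q, y₂)]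
      simp only [hz, hc, map_add, map_smul, smul_add]
      match_scalars <;> linarith
    have hmin := hxstar_min c z
    have hE2c : E₂ (Λ (z, c)) ≤ a * E₂ (Λ (p, x₂)) + b * E₂ (Λ (q, y₂)) := by
      rw [hΛaff]
      simpa using hE₂conv.2 (Set.mem_univ (Λ (p, x₂))) (Set.mem_univ (Λ (q, y₂))) ha hb hab
    have hE1c : E₁ z ≤ a * E₁ p + b * E₁ q := by
      simpa [hz] using hE₁conv.2 (Set.mem_univ p) (Set.mem_univ q) ha hb hab
    have hinner : (inner ℝ P₁ z : ℝ) = a * inner ℝ P₁ p + b * inner ℝ P₁ q := by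
      simp [hz, inner_add_right, real_inner_smul_right]
    have h1 := hEred c
    have h2 := hEred x₂
    have h3 := hEred y₂
    rw [← hp] at h2
    rw [← hq] at h3
    simp only [smul_eq_mul]
    rw [← h1] at hmin
    rw [h2, h3]
    linarith
end
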